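/- Let H be a UCG with radius r and induced subcover structure as above: D''_m denotes the intersection of D_m with the union of all radial paths through x_1,...,x_{k''}, where {P_1,...,P_{k''}} is a subcovering with uniquely-owned vertices p̃_i. Then |D''_1| ≤ |D''_m| for all 1 ≤ m ≤ r−1. -/

import Mathlib

open SimpleGraph

variable {V : Type*} {ι : Type*}

/-- Eccentricity (in `ℕ∞`) of a vertex. -/
noncomputable def gecc (G : SimpleGraph V) (v : V) : ℕ∞ := ⨆ u, G.edist v u

/-- Radius of a graph. -/
noncomputable def grad (G : SimpleGraph V) : ℕ∞ := ⨅ v, gecc G v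

/-- Diameter of a graph. -/
noncomputable def gdiam (G : SimpleGraph V) : ℕ∞ := ⨆ v, gecc G v

/-- The center: vertices of minimum eccentricity. -/
def gcenter (G : SimpleGraph V) : Set V := {v | gecc G v = grad G}

/-- Eccentric vertices of `v`. -/
def eccSet (G : SimpleGraph V) (v : V) : Set V := {u | G.edist v u = gecc G v}

/-- The centered periphery. -/
def cperiph (G : SimpleGraph V) : Set V := ⋃ z ∈ gcenter G, eccSet G z

/-- Uniform central graph. -/
def IsUCG (G : SimpleGraph V) : Prop := ∀ c ∈ gcenter G, eccSet G c = cperiph G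

/-- Condition A. -/
def CondA (G : SimpleGraph V) (P : ι → Set V) : Prop :=
  ∀ i, ∃ p, p ∉ P i ∧ ∀ q ∈ P i, 2 ≤ G.edist q p

/-- Condition B. -/
def CondB (G : SimpleGraph V) (P : ι → Set V) : Prop :=
  ∀ i, ∀ p ∈ P i,
    (∃ p', p' ∉ P i ∧ 3 ≤ G.edist p p') ∨ (∃ j, j ≠ i ∧ ∀ q ∈ P j, 2 ≤ G.edist p q)

/-- Condition A′. -/
def CondA' (G : SimpleGraph V) (P : ι → Set V) : Prop :=
  ∀ i, (∃ p, p ∉ P i ∧ ∀ q ∈ P i, 3 ≤ G.edist q p) ∨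
    (∃ j, j ≠ i ∧ ∀ q ∈ P i, ∀ q' ∈ P j, 2 ≤ G.edist q q')

/-- Condition B′. -/
def CondB' (G : SimpleGraph V) (P : ι → Set V) : Prop :=
  ∀ i, ∀ p ∈ P i, ∃ j, j ≠ i ∧ ∀ q ∈ P j, 2 ≤ G.edist p q

/-- Minimum size of a covering satisfying condition A. -/
noncomputable def covA (G : SimpleGraph V) : ℕ :=
  sInf {k | ∃ P : Fin k → Set V, (⋃ i, P i) = Set.univ ∧ CondA G P}

/-- Minimum size of a covering satisfying conditions A and B. -/
noncomputable def covAB (G : SimpleGraph V) : ℕ :=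
  sInf {k | ∃ P : Fin k → Set V, (⋃ i, P i) = Set.univ ∧ CondA G P ∧ CondB G P}

/-- Distance from a vertex to the center. -/
noncomputable def distToCenter (G : SimpleGraph V) (u : V) : ℕ∞ :=
  ⨅ z ∈ gcenter G, G.edist u z

/-- The set of vertices at distance exactly `m` from the center. -/
def Dlevel (G : SimpleGraph V) (m : ℕ) : Set V := {u | distToCenter G u = (m : ℕ∞)}

/-- Vertices of the centered periphery lying on a radial path through `x`. -/
def Pset (G : SimpleGraph V) (r : ℕ) (x : V) : Set V :=
  {p | p ∈ cperiph G ∧ ∃ c ∈ gcenter G, ∃ W : G.Walk c p,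
    W.IsPath ∧ W.length = r ∧ x ∈ W.support}

/-- All vertices lying on some radial path through `x`. -/
def radialSupport (G : SimpleGraph V) (r : ℕ) (x : V) : Set V :=
  {u | ∃ c ∈ gcenter G, ∃ p ∈ cperiph G, ∃ W : G.Walk c p,
    W.IsPath ∧ W.length = r ∧ x ∈ W.support ∧ u ∈ W.support}


section Helpers
variable [DecidableEq V] {G : SimpleGraph V}

lemma takeUntil_support_take {a b u : V} (W : G.Walk a b) (hu : u ∈ W.support) :
    (W.takeUntil u hu).support = W.support.take ((W.takeUntil u hu).length + 1) := by
  have hs : W.support = (W.takeUntil u hu).support ++ ((W.dropUntil u hu).support.tail) := by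
    conv_lhs => rw [← W.take_spec hu]
    rw [Walk.support_append]
  rw [hs, List.take_left' (Walk.length_support _)]

lemma support_getElem?_takeUntil {a b u : V} (W : G.Walk a b) (hu : u ∈ W.support) :
    W.support[(W.takeUntil u hu).length]? = some u := by
  set t := (W.takeUntil u hu).length with ht
  have hlen : (W.takeUntil u hu).support.length = t + 1 := Walk.length_support _
  have h1 : (W.takeUntil u hu).support[t]? = some u := by
    rw [List.getElem?_eq_getElem (by omega)]
    have hlast : (W.takeUntil u hu).support.getLast (by simp) = u := Walk.getLast_support _
    rw [List.getLast_eq_getElem] at hlast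
    simpa [hlen] using hlast
  rw [takeUntil_support_take W hu] at h1
  rwa [List.getElem?_take_of_lt (by omega)] at h1

lemma eq_of_takeUntil_length_eq {a b u v : V} (W : G.Walk a b) (hu : u ∈ W.support)
    (hv : v ∈ W.support)
    (h : (W.takeUntil u hu).length = (W.takeUntil v hv).length) : u = v := by
  have h1 := support_getElem?_takeUntil W hu
  have h2 := support_getElem?_takeUntil W hv
  rw [h, h2] at h1
  exact (Option.some_injective _ h1).symm

lemma exists_takeUntil_length_eq {a b : V} {W : G.Walk a b} (hW : W.IsPath) {n : ℕ}
    (hn : n ≤ W.length) : ∃ u, ∃ hu : u ∈ W.support, (W.takeUntil u hu).length = n := by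
  have hlt : n < W.support.length := by rw [Walk.length_support]; omega
  refine ⟨W.support[n], List.getElem_mem _, ?_⟩
  set u := W.support[n] with hudef
  have h1 := support_getElem?_takeUntil W (List.getElem_mem hlt : u ∈ W.support)
  have h2 : W.support[n]? = some u := List.getElem?_eq_getElem hlt
  exact (List.getElem?_inj
    (by
      have := List.getElem?_eq_some_iff.mp h1
      exact this.choose) hW.support_nodup).mp (h1.trans h2.symm)

end Helpers

/-- `|D''₁| ≤ |D''ₘ|` for `1 ≤ m ≤ r − 1`. -/
theorem stmt4 [Fintype V] (G : SimpleGraph V) (hconn : G.Connected) (hUCG : IsUCG G)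
    {r : ℕ} (hr : grad G = (r : ℕ∞))
    {k'' : ℕ} (x : Fin k'' → V) (hinj : Function.Injective x)
    (hxD : ∀ i, x i ∈ Dlevel G 1)
    (hcov : (⋃ i, Pset G r (x i)) = cperiph G)
    (ptil : Fin k'' → V)
    (hown : ∀ i, ptil i ∈ Pset G r (x i) ∧ ∀ j, j ≠ i → ptil i ∉ Pset G r (x j))
    {m : ℕ} (hm1 : 1 ≤ m) (hmr : m ≤ r - 1) :
    (Dlevel G 1 ∩ ⋃ i, radialSupport G r (x i)).ncard ≤
      (Dlevel G m ∩ ⋃ i, radialSupport G r (x i)).ncard := by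
  classical
  have hzp : ∀ z ∈ gcenter G, ∀ p ∈ cperiph G, G.edist z p = (r : ℕ∞) := by
    intro z hz p hp
    have hz' : gecc G z = grad G := hz
    have h1 : p ∈ eccSet G z := by rw [hUCG z hz]; exact hp
    have h2 : G.edist z p = gecc G z := h1
    rw [h2, hz', hr]
  have key : ∀ (cc pp u : V) (hc : cc ∈ gcenter G) (hp : pp ∈ cperiph G) (W : G.Walk cc pp),
      W.length = r → ∀ hu : u ∈ W.support,
      G.edist cc u = ((W.takeUntil u hu).length : ℕ∞) ∧
      G.edist u pp = ((W.dropUntil u hu).length : ℕ∞) ∧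
      distToCenter G u = ((W.takeUntil u hu).length : ℕ∞) := by
    intro cc pp u hc hp W hlen hu
    have hsum : (W.takeUntil u hu).length + (W.dropUntil u hu).length = r := by
      have h := congrArg Walk.length (W.take_spec hu)
      rw [Walk.length_append] at h
      omega
    have ha : G.edist cc u ≤ ((W.takeUntil u hu).length : ℕ∞) := Walk.edist_le _
    have hb : G.edist u pp ≤ ((W.dropUntil u hu).length : ℕ∞) := Walk.edist_le _
    have htri : (r : ℕ∞) ≤ G.edist cc u + G.edist u pp := by
      rw [← hzp cc hc pp hp]; exact SimpleGraph.edist_triangle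
    have hat : G.edist cc u ≠ ⊤ := (lt_of_le_of_lt ha (ENat.coe_lt_top _)).ne
    have hbt : G.edist u pp ≠ ⊤ := (lt_of_le_of_lt hb (ENat.coe_lt_top _)).ne
    lift G.edist cc u to ℕ using hat with na hna
    lift G.edist u pp to ℕ using hbt with nb hnb
    rw [Nat.cast_le] at ha hb
    rw [← Nat.cast_add, Nat.cast_le] at htri
    refine ⟨by exact_mod_cast congrArg (Nat.cast : ℕ → ℕ∞) (by omega : na = (W.takeUntil u hu).length),
      by exact_mod_cast congrArg (Nat.cast : ℕ → ℕ∞) (by omega : nb = (W.dropUntil u hu).length),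
      le_antisymm ?_ ?_⟩
    · calc distToCenter G u ≤ G.edist u cc := iInf₂_le cc hc
        _ = (na : ℕ∞) := by rw [SimpleGraph.edist_comm]; exact hna.symm
        _ = ((W.takeUntil u hu).length : ℕ∞) := by exact_mod_cast (by omega : na = (W.takeUntil u hu).length)
    · refine le_iInf₂ fun z hz => ?_
      by_cases hzt : G.edist u z = ⊤
      · rw [hzt]; exact le_top
      · have h3 : (r : ℕ∞) ≤ G.edist z u + G.edist u pp := by
          rw [← hzp z hz pp hp]; exact SimpleGraph.edist_triangle
        rw [SimpleGraph.edist_comm, ← hnb] at h3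
        lift G.edist u z to ℕ using hzt with nz hnz
        rw [← Nat.cast_add, Nat.cast_le] at h3
        exact Nat.cast_le.mpr (by omega)
  have hrange : Dlevel G 1 ∩ ⋃ i, radialSupport G r (x i) ⊆ Set.range x := by
    rintro u ⟨hu1, hu2⟩
    rw [Set.mem_iUnion] at hu2
    obtain ⟨i, cc, hc, pp, hp, W, hWp, hWlen, hxiW, huW⟩ := hu2
    have h1 := (key cc pp u hc hp W hWlen huW).2.2
    have h2 := (key cc pp (x i) hc hp W hWlen hxiW).2.2
    have hu1' : distToCenter G u = ((1 : ℕ) : ℕ∞) := hu1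
    have hx1 : distToCenter G (x i) = ((1 : ℕ) : ℕ∞) := hxD i
    have e1 : (W.takeUntil u huW).length = (W.takeUntil (x i) hxiW).length := by
      have := (h1.symm.trans hu1').trans (hx1.symm.trans h2)
      exact_mod_cast this
    exact ⟨i, (eq_of_takeUntil_length_eq W huW hxiW e1).symm⟩
  have hstep1 : (Dlevel G 1 ∩ ⋃ i, radialSupport G r (x i)).ncard ≤ k'' := by
    have h1 : (Set.range x).ncard = k'' := by
      rw [← Set.image_univ, Set.ncard_image_of_injective _ hinj, Set.ncard_univ,
        Nat.card_eq_fintype_card, Fintype.card_fin]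
    calc (Dlevel G 1 ∩ ⋃ i, radialSupport G r (x i)).ncard
        ≤ (Set.range x).ncard := Set.ncard_le_ncard hrange (Set.toFinite _)
      _ = k'' := h1
  have hmr' : m ≤ r := by omega
  choose c hc W hWp hWlen hxw using fun i => (hown i).1.2
  have hper : ∀ i, ptil i ∈ cperiph G := fun i => (hown i).1.1
  have hE : ∀ i : Fin k'', ∃ u, ∃ hu : u ∈ (W i).support, ((W i).takeUntil u hu).length = m :=
    fun i => exists_takeUntil_length_eq (hWp i) (by rw [hWlen i]; exact hmr')
  choose g hgmem hglen using hE
  have hgD : ∀ i, g i ∈ Dlevel G m ∩ ⋃ j, radialSupport G r (x j) := by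
    intro i
    constructor
    · have h := (key (c i) (ptil i) (g i) (hc i) (hper i) (W i) (hWlen i) (hgmem i)).2.2
      show distToCenter G (g i) = (m : ℕ∞)
      rw [h, hglen i]
    · exact Set.mem_iUnion.mpr ⟨i, c i, hc i, ptil i, hper i, W i, hWp i, hWlen i, hxw i, hgmem i⟩
  have hginj : Function.Injective g := by
    intro i j hij
    by_contra hne
    have hwj : g i ∈ (W j).support := hij ▸ hgmem j
    have hkeyj := key (c j) (ptil j) (g i) (hc j) (hper j) (W j) (hWlen j) hwj
    have hdm : distToCenter G (g i) = (m : ℕ∞) := (hgD i).1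
    have hTj : ((W j).takeUntil (g i) hwj).length = m := by
      exact_mod_cast (hkeyj.2.2.symm.trans hdm)
    have hDi : ((W i).dropUntil (g i) (hgmem i)).length = r - m := by
      have hs := congrArg Walk.length ((W i).take_spec (hgmem i))
      rw [Walk.length_append] at hs
      have h1 := hglen i
      have h2 := hWlen i
      omega
    have hQlen : (((W j).takeUntil (g i) hwj).append ((W i).dropUntil (g i) (hgmem i))).length = r := by
      rw [Walk.length_append, hTj, hDi]; omega
    have hQpath : (((W j).takeUntil (g i) hwj).append ((W i).dropUntil (g i) (hgmem i))).IsPath := by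
      apply Walk.isPath_of_length_eq_dist
      have hd : G.dist (c j) (ptil i) = r := by
        have h := hzp (c j) (hc j) (ptil i) (hper i)
        simp only [SimpleGraph.dist, h, ENat.toNat_coe]
      rw [hQlen, hd]
    have hxjQ : x j ∈ (((W j).takeUntil (g i) hwj).append ((W i).dropUntil (g i) (hgmem i))).support := by
      apply Walk.subset_support_append_left
      have hxj1 : ((W j).takeUntil (x j) (hxw j)).length = 1 := by
        have h := (key (c j) (ptil j) (x j) (hc j) (hper j) (W j) (hWlen j) (hxw j)).2.2
        have h2 : distToCenter G (x j) = ((1 : ℕ) : ℕ∞) := hxD j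
        exact_mod_cast (h.symm.trans h2)
      have hidx : (W j).support[(1 : ℕ)]? = some (x j) := by
        have h := support_getElem?_takeUntil (W j) (hxw j)
        rwa [hxj1] at h
      have hts := takeUntil_support_take (W j) hwj
      rw [hTj] at hts
      rw [hts]
      refine List.mem_of_getElem? (i := 1) ?_
      rw [List.getElem?_take_of_lt (by omega)]
      exact hidx
    exact (hown i).2 j (fun h => hne h.symm)
      ⟨hper i, c j, hc j, ((W j).takeUntil (g i) hwj).append ((W i).dropUntil (g i) (hgmem i)),
        hQpath, hQlen, hxjQ⟩
  have hstep2 : k'' ≤ (Dlevel G m ∩ ⋃ i, radialSupport G r (x i)).ncard := by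
    have h1 : (Set.range g).ncard = k'' := by
      rw [← Set.image_univ, Set.ncard_image_of_injective _ hginj, Set.ncard_univ,
        Nat.card_eq_fintype_card, Fintype.card_fin]
    exact le_trans (le_of_eq h1.symm)
      (Set.ncard_le_ncard (by rintro _ ⟨i, rfl⟩; exact hgD i) (Set.toFinite _))
  exact hstep1.trans hstep2
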